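/- Let P be the canonical probability measure on the Cantor set, n ≥ 2, and α_n ⊆ ⋃_{j=1}^n S_j an optimal set of n points for P with respect to constraints S_j = {(x, 1/j) : 0 ≤ x ≤ 1}, with elements (a₁,b₁),…,(a_n,b_n), a₁ < ⋯ < a_n. Then b_j = 1/n for all j, i.e., α_n ⊆ S_n. -/

import Mathlib

open MeasureTheory Real Set Filter
open scoped ENNReal Topology

noncomputable section

/-- First generating map of the Cantor set. -/
def T1 (x : ℝ) : ℝ := x / 3

/-- Second generating map of the Cantor set. -/
def T2 (x : ℝ) : ℝ := x / 3 + 2 / 3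

/-- Map indexed by `Fin 2`. -/
def Tm : Fin 2 → ℝ → ℝ := ![T1, T2]

/-- Composition `T_σ = T_{σ₁} ∘ ⋯ ∘ T_{σ_k}` for a word over `{1,2}` (as a list over `Fin 2`). -/
def Tw (l : List (Fin 2)) : ℝ → ℝ := l.foldr (fun i g => Tm i ∘ g) id

/-- Squared Euclidean distance between `x ∈ ℝ` (identified with `(x,0)`) and `(a,b) ∈ ℝ²`. -/
def rho (x : ℝ) (p : ℝ × ℝ) : ℝ := (x - p.1) ^ 2 + p.2 ^ 2

/-- Distortion error of a set `α ⊆ ℝ²` for `P`. -/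
def distortion (P : Measure ℝ) (α : Set (ℝ × ℝ)) : ℝ := ∫ x, ⨅ a : α, rho x (a : ℝ × ℝ) ∂P

/-- The constraint `S_j = {(x, 1/j) : 0 ≤ x ≤ 1}`. -/
def Sj (j : ℕ) : Set (ℝ × ℝ) := {p | p.1 ∈ Icc (0 : ℝ) 1 ∧ p.2 = 1 / (j : ℝ)}

/-- The `n`th constrained quantization error for `P` with respect to the family `Sj`. -/
def Vc (P : Measure ℝ) (n : ℕ) : ℝ :=
  sInf {e : ℝ | ∃ α : Finset (ℝ × ℝ), α.Nonempty ∧ α.card ≤ n ∧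
    (↑α : Set (ℝ × ℝ)) ⊆ ⋃ j ∈ Finset.Icc 1 n, Sj j ∧ e = distortion P (↑α : Set (ℝ × ℝ))}

/-! ### Auxiliary lemmas -/

lemma contT1 : Continuous T1 := continuous_id.div_const 3
lemma contT2 : Continuous T2 := (continuous_id.div_const 3).add continuous_const

lemma P_apply (P : Measure ℝ)
    (hP : P = (1 / 2 : ℝ≥0∞) • P.map T1 + (1 / 2 : ℝ≥0∞) • P.map T2)
    {s : Set ℝ} (hs : MeasurableSet s) :
    P s = 1/2 * P (T1 ⁻¹' s) + 1/2 * P (T2 ⁻¹' s) := by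
  conv_lhs => rw [hP]
  rw [Measure.add_apply, Measure.smul_apply, Measure.smul_apply, smul_eq_mul, smul_eq_mul,
    Measure.map_apply contT1.measurable hs, Measure.map_apply contT2.measurable hs]

lemma P_outside (P : Measure ℝ) [IsProbabilityMeasure P]
    (hP : P = (1 / 2 : ℝ≥0∞) • P.map T1 + (1 / 2 : ℝ≥0∞) • P.map T2) :
    P (Icc (0:ℝ) 1)ᶜ = 0 := by
  set A : ℝ → Set ℝ := fun r => (Icc (-r) (1+r))ᶜ with hA
  have hmeas : ∀ r, MeasurableSet (A r) := fun r => measurableSet_Icc.compl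
  have hmono : ∀ {r s : ℝ}, r ≤ s → A s ⊆ A r := by
    intro r s hrs x hx hc
    exact hx ⟨le_trans (by linarith) hc.1, le_trans hc.2 (by linarith)⟩
  have hstep : ∀ r : ℝ, 0 ≤ r → P (A r) ≤ P (A (3*r)) := by
    intro r hr
    rw [P_apply P hP (hmeas r)]
    have h1 : T1 ⁻¹' (A r) ⊆ A (3*r) := by
      intro x hx hc
      simp only [mem_Icc] at hc
      exact hx (mem_Icc.mpr ⟨by simp only [T1]; linarith [hc.1], by simp only [T1]; linarith [hc.2]⟩)
    have h2 : T2 ⁻¹' (A r) ⊆ A (3*r) := by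
      intro x hx hc
      simp only [mem_Icc] at hc
      exact hx (mem_Icc.mpr ⟨by simp only [T2]; linarith [hc.1], by simp only [T2]; linarith [hc.2]⟩)
    calc 1/2 * P (T1 ⁻¹' (A r)) + 1/2 * P (T2 ⁻¹' (A r))
        ≤ 1/2 * P (A (3*r)) + 1/2 * P (A (3*r)) := by
          gcongr <;> exact measure_mono ‹_›
      _ = P (A (3*r)) := by
          rw [← two_mul, ← mul_assoc,
            show (2:ℝ≥0∞) * (1/2) = 1 by
              rw [mul_one_div, ENNReal.div_self] <;> norm_num, one_mul]
  have hiter : ∀ r : ℝ, 0 ≤ r → ∀ k : ℕ, P (A r) ≤ P (A (3^k * r)) := by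
    intro r hr k
    induction k with
    | zero => simp
    | succ k ih =>
      refine ih.trans ?_
      have := hstep (3^k * r) (by positivity)
      calc P (A (3^k*r)) ≤ P (A (3*(3^k*r))) := this
        _ = P (A (3^(k+1)*r)) := by ring_nf
  have hzero : ∀ r : ℝ, 0 < r → P (A r) = 0 := by
    intro r hr
    have hInter : (⋂ k : ℕ, A (3^k * r)) = ∅ := by
      ext x
      simp only [Set.mem_iInter, Set.mem_empty_iff_false, iff_false, not_forall]
      obtain ⟨k, hk⟩ := pow_unbounded_of_one_lt (|x|/r) (y := (3:ℝ)) (by norm_num)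
      refine ⟨k, fun hc => hc ?_⟩
      have h3 : |x| < 3^k * r := by
        rw [div_lt_iff₀ hr] at hk; linarith
      have := abs_lt.mp h3
      constructor <;> [linarith; linarith]
    have htend : Tendsto (fun k : ℕ => P (A (3^k * r))) atTop (𝓝 (P (⋂ k : ℕ, A (3^k * r)))) := by
      refine tendsto_measure_iInter_atTop (fun k => (hmeas _).nullMeasurableSet) ?_ ⟨0, measure_ne_top P _⟩
      intro i j hij
      exact hmono (by
        have : (3:ℝ)^i ≤ 3^j := pow_le_pow_right₀ (by norm_num) hij
        nlinarith)
    rw [hInter] at htend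
    simp only [measure_empty] at htend
    have hle : P (A r) ≤ 0 := by
      refine le_of_tendsto_of_tendsto tendsto_const_nhds htend ?_ |>.trans (le_refl 0)
      · filter_upwards with k using hiter r hr.le k
    exact le_antisymm (le_trans hle (le_refl 0)) zero_le
  have hsub : (Icc (0:ℝ) 1)ᶜ ⊆ ⋃ k : ℕ, A (1/(k+1)) := by
    intro x hx
    simp only [mem_compl_iff, mem_Icc, not_and_or, not_le] at hx
    simp only [Set.mem_iUnion]
    rcases hx with hx | hx
    · obtain ⟨k, hk⟩ := exists_nat_one_div_lt (ε := -x) (by linarith)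
      exact ⟨k, fun hc => by simp only [mem_Icc] at hc; linarith [hc.1]⟩
    · obtain ⟨k, hk⟩ := exists_nat_one_div_lt (ε := x - 1) (by linarith)
      exact ⟨k, fun hc => by simp only [mem_Icc] at hc; linarith [hc.2]⟩
  refine measure_mono_null hsub (measure_iUnion_null fun k => hzero _ (by positivity))

/-- Points all of whose neighborhoods have positive measure. -/
def suppPt (P : Measure ℝ) (c : ℝ) : Prop := ∀ r : ℝ, 0 < r → 0 < P (Metric.ball c r)

lemma suppPt_exists (P : Measure ℝ) [IsProbabilityMeasure P] : ∃ c, suppPt P c := by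
  by_contra h
  push_neg at h
  simp only [suppPt, not_forall, not_lt, nonpos_iff_eq_zero] at h
  choose r hr hr0 using fun x => h x
  obtain ⟨T, hTc, hTu⟩ := TopologicalSpace.isOpen_iUnion_countable
    (fun x : ℝ => Metric.ball x (r x)) (fun x => Metric.isOpen_ball)
  have huniv : (⋃ x ∈ T, Metric.ball x (r x)) = univ := by
    rw [hTu]; ext y
    simp only [Set.mem_iUnion, Set.mem_univ, iff_true]
    exact ⟨y, Metric.mem_ball_self (hr y)⟩
  have : P univ = 0 := by
    rw [← huniv]
    exact (measure_biUnion_null_iff hTc).mpr fun x _ => hr0 x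
  simp [measure_univ] at this

lemma suppPt_T1 (P : Measure ℝ)
    (hP : P = (1 / 2 : ℝ≥0∞) • P.map T1 + (1 / 2 : ℝ≥0∞) • P.map T2)
    {c : ℝ} (hc : suppPt P c) : suppPt P (T1 c) := by
  intro s hs
  rw [P_apply P hP measurableSet_ball]
  have hsub : Metric.ball c s ⊆ T1 ⁻¹' Metric.ball (T1 c) s := by
    intro y hy
    simp only [Metric.mem_ball, Set.mem_preimage, T1, Real.dist_eq] at *
    have heq : y/3 - c/3 = (y - c)/3 := by ring
    rw [heq, abs_div, show |(3:ℝ)| = 3 by norm_num]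
    linarith [abs_nonneg (y - c), hy]
  have h1 : 0 < P (T1 ⁻¹' Metric.ball (T1 c) s) :=
    lt_of_lt_of_le (hc s hs) (measure_mono hsub)
  have : (0:ℝ≥0∞) < 1/2 * P (T1 ⁻¹' Metric.ball (T1 c) s) := by
    refine ENNReal.mul_pos (by norm_num) h1.ne'
  exact lt_of_lt_of_le this le_self_add

lemma suppPt_T2 (P : Measure ℝ)
    (hP : P = (1 / 2 : ℝ≥0∞) • P.map T1 + (1 / 2 : ℝ≥0∞) • P.map T2)
    {c : ℝ} (hc : suppPt P c) : suppPt P (T2 c) := by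
  intro s hs
  rw [P_apply P hP measurableSet_ball]
  have hsub : Metric.ball c s ⊆ T2 ⁻¹' Metric.ball (T2 c) s := by
    intro y hy
    simp only [Metric.mem_ball, Set.mem_preimage, T2, Real.dist_eq] at *
    have : y/3 + 2/3 - (c/3 + 2/3) = (y - c)/3 := by ring
    rw [this, abs_div]
    have h3 : |(3:ℝ)| = 3 := by norm_num
    rw [h3]
    linarith [abs_nonneg (y - c), hy]
  have h1 : 0 < P (T2 ⁻¹' Metric.ball (T2 c) s) :=
    lt_of_lt_of_le (hc s hs) (measure_mono hsub)
  have : (0:ℝ≥0∞) < 1/2 * P (T2 ⁻¹' Metric.ball (T2 c) s) := by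
    refine ENNReal.mul_pos (by norm_num) h1.ne'
  exact lt_of_lt_of_le this le_add_self

lemma suppPt_mem_Icc (P : Measure ℝ) [IsProbabilityMeasure P]
    (hP : P = (1 / 2 : ℝ≥0∞) • P.map T1 + (1 / 2 : ℝ≥0∞) • P.map T2)
    {c : ℝ} (hc : suppPt P c) : c ∈ Icc (0:ℝ) 1 := by
  by_contra h
  simp only [mem_Icc, not_and_or, not_le] at h
  have key : ∀ r : ℝ, 0 < r → Metric.ball c r ⊆ (Icc (0:ℝ) 1)ᶜ → False := by
    intro r hr hsub
    have := lt_of_lt_of_le (hc r hr) (measure_mono hsub)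
    rw [P_outside P hP] at this
    exact lt_irrefl _ this
  rcases h with h | h
  · refine key (-c) (by linarith) ?_
    intro y hy hmem
    simp only [Metric.mem_ball, Real.dist_eq] at hy
    have := abs_lt.mp hy
    have := hmem.1
    linarith [this]
  · refine key (c-1) (by linarith) ?_
    intro y hy hmem
    simp only [Metric.mem_ball, Real.dist_eq] at hy
    have := abs_lt.mp hy
    have := hmem.2
    linarith [this]

lemma suppPt_infinite (P : Measure ℝ) [IsProbabilityMeasure P]
    (hP : P = (1 / 2 : ℝ≥0∞) • P.map T1 + (1 / 2 : ℝ≥0∞) • P.map T2) :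
    {c : ℝ | suppPt P c}.Infinite := by
  obtain ⟨c₀, hc₀⟩ := suppPt_exists P
  set f : ℕ → ℝ := fun k => (c₀/3 + 2/3) * (1/3)^k with hf
  have hc0pos : 0 < c₀/3 + 2/3 := by
    have := (suppPt_mem_Icc P hP hc₀).1; linarith
  have hmem : ∀ k, f k ∈ {c : ℝ | suppPt P c} := by
    intro k
    induction k with
    | zero =>
      have : f 0 = T2 c₀ := by simp [hf, T2]
      rw [this]; exact suppPt_T2 P hP hc₀
    | succ k ih =>
      have : f (k+1) = T1 (f k) := by simp [hf, T1, pow_succ]; ring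
      rw [this]; exact suppPt_T1 P hP ih
  have hinj : Function.Injective f := by
    have hsa : StrictAnti f := by
      intro i j hij
      exact mul_lt_mul_of_pos_left
        (pow_lt_pow_right_of_lt_one₀ (by norm_num) (by norm_num) hij) hc0pos
    exact hsa.injective
  exact Set.infinite_of_injective_forall_mem hinj hmem

lemma rho_nonneg (x : ℝ) (p : ℝ × ℝ) : 0 ≤ rho x p := by unfold rho; positivity

lemma iInf_coe_eq_inf' (S : Finset (ℝ × ℝ)) (hS : S.Nonempty) (x : ℝ) :
    (⨅ a : (↑S : Set (ℝ × ℝ)), rho x (a : ℝ × ℝ)) = S.inf' hS (rho x) := by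
  rw [Finset.inf'_eq_csInf_image, iInf]
  congr 1
  ext y
  simp only [Set.mem_range, Set.mem_image, Finset.mem_coe]
  constructor
  · rintro ⟨⟨a, ha⟩, rfl⟩; exact ⟨a, ha, rfl⟩
  · rintro ⟨a, ha, rfl⟩; exact ⟨⟨a, ha⟩, rfl⟩

lemma continuous_inf' (S : Finset (ℝ × ℝ)) (hS : S.Nonempty) :
    Continuous (fun x => S.inf' hS (rho x)) := by
  refine continuous_iff_continuousAt.2 fun x => ?_
  refine ContinuousAt.finset_inf'_apply hS fun p _ => ?_
  have : Continuous (fun y => rho y p) := by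
    unfold rho
    exact ((continuous_id.sub continuous_const).pow 2).add continuous_const
  exact this.continuousAt

lemma inf'_nonneg (S : Finset (ℝ × ℝ)) (hS : S.Nonempty) (x : ℝ) :
    0 ≤ S.inf' hS (rho x) :=
  Finset.le_inf' hS _ fun p _ => rho_nonneg x p

lemma mem_union_iff {n : ℕ} {p : ℝ × ℝ}
    (hp : p ∈ ⋃ j ∈ Finset.Icc 1 n, Sj j) :
    ∃ j : ℕ, 1 ≤ j ∧ j ≤ n ∧ p.1 ∈ Icc (0:ℝ) 1 ∧ p.2 = 1 / (j : ℝ) := by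
  simp only [Set.mem_iUnion, Finset.mem_Icc] at hp
  obtain ⟨j, ⟨hj1, hj2⟩, hmem⟩ := hp
  exact ⟨j, hj1, hj2, hmem.1, hmem.2⟩

lemma snd_bounds {n : ℕ} (hn : 1 ≤ n) {p : ℝ × ℝ}
    (hp : p ∈ ⋃ j ∈ Finset.Icc 1 n, Sj j) :
    1 / (n : ℝ) ≤ p.2 ∧ p.2 ≤ 1 := by
  obtain ⟨j, hj1, hj2, _, hp2⟩ := mem_union_iff hp
  have hjpos : (0:ℝ) < j := by exact_mod_cast hj1
  have hnpos : (0:ℝ) < n := by exact_mod_cast le_trans hj1 hj2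
  constructor
  · rw [hp2]
    apply div_le_div_of_nonneg_left (by norm_num) hjpos
    exact_mod_cast hj2
  · rw [hp2]
    rw [div_le_one hjpos]
    exact_mod_cast hj1

lemma integrable_inf' (P : Measure ℝ) [IsProbabilityMeasure P]
    (hout : P (Icc (0:ℝ) 1)ᶜ = 0)
    {n : ℕ} (hn : 1 ≤ n)
    (S : Finset (ℝ × ℝ)) (hS : S.Nonempty)
    (hsub : (↑S : Set (ℝ × ℝ)) ⊆ ⋃ j ∈ Finset.Icc 1 n, Sj j) :
    Integrable (fun x => S.inf' hS (rho x)) P := by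
  refine Integrable.mono' (integrable_const 2) (continuous_inf' S hS).aestronglyMeasurable ?_
  have hmem : ∀ᵐ x ∂P, x ∈ Icc (0:ℝ) 1 := by
    rw [ae_iff]
    exact hout
  filter_upwards [hmem] with x hx
  rw [Real.norm_eq_abs, abs_of_nonneg (inf'_nonneg S hS x)]
  obtain ⟨p, hp⟩ := hS
  refine le_trans (Finset.inf'_le _ hp) ?_
  obtain ⟨j, hj1, hj2, hp1, hp2⟩ := mem_union_iff (hsub hp)
  have h1 : (x - p.1)^2 ≤ 1 := by
    have h1a := hx.1; have h1b := hx.2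
    have h2a := hp1.1; have h2b := hp1.2
    nlinarith
  have h2 : p.2^2 ≤ 1 := by
    have := (snd_bounds (le_trans hj1 hj2) (hsub hp)).2
    have hjpos : (0:ℝ) < j := by exact_mod_cast hj1
    have : 0 < p.2 := by rw [hp2]; positivity
    nlinarith [(snd_bounds (le_trans hj1 hj2) (hsub hp)).2]
  unfold rho
  linarith

lemma strict_integral_lt (P : Measure ℝ) {f g : ℝ → ℝ}
    (hf : Integrable f P) (hg : Integrable g P)
    (hle : ∀ x, f x ≤ g x) {s : Set ℝ} (hs : P s ≠ 0)
    (hstrict : ∀ x ∈ s, f x < g x) :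
    ∫ x, f x ∂P < ∫ x, g x ∂P := by
  have hint : Integrable (fun x => g x - f x) P := hg.sub hf
  have hnn : 0 ≤ fun x => g x - f x := fun x => by simp [sub_nonneg.mpr (hle x)]
  have h0 : ∫ x, (g x - f x) ∂P ≠ 0 := by
    intro hc
    have := (integral_eq_zero_iff_of_nonneg hnn hint).mp hc
    have hnull : P {x | g x - f x ≠ 0} = 0 := by
      have := this
      rw [Filter.EventuallyEq, ae_iff] at this
      simpa using this
    refine hs (measure_mono_null ?_ hnull)
    intro x hx
    simp only [Set.mem_setOf_eq]
    have := hstrict x hx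
    intro h; linarith [sub_eq_zero.mp h]
  have hpos : 0 < ∫ x, (g x - f x) ∂P :=
    lt_of_le_of_ne (integral_nonneg hnn) (Ne.symm h0)
  rw [integral_sub hg hf] at hpos
  linarith

lemma distortion_eq (P : Measure ℝ) (S : Finset (ℝ × ℝ)) (hS : S.Nonempty) :
    distortion P (↑S : Set (ℝ × ℝ)) = ∫ x, S.inf' hS (rho x) ∂P := by
  unfold distortion
  congr 1
  ext x
  exact iInf_coe_eq_inf' S hS x

lemma Vc_le (P : Measure ℝ) (n : ℕ) (S : Finset (ℝ × ℝ)) (hS : S.Nonempty)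
    (hcard : S.card ≤ n) (hsub : (↑S : Set (ℝ × ℝ)) ⊆ ⋃ j ∈ Finset.Icc 1 n, Sj j) :
    Vc P n ≤ distortion P (↑S : Set (ℝ × ℝ)) := by
  apply csInf_le
  · refine ⟨0, fun e he => ?_⟩
    obtain ⟨β, hβne, _, _, rfl⟩ := he
    rw [distortion_eq P β hβne]
    exact integral_nonneg fun x => inf'_nonneg β hβne x
  · exact ⟨S, hS, hcard, hsub, rfl⟩

theorem optimal_sets_lie_on_Sn (P : Measure ℝ) [IsProbabilityMeasure P]
    (hP : P = (1 / 2 : ℝ≥0∞) • P.map T1 + (1 / 2 : ℝ≥0∞) • P.map T2)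
    (n : ℕ) (hn : 2 ≤ n) (α : Finset (ℝ × ℝ)) (hne : α.Nonempty) (hcard : α.card ≤ n)
    (hsub : (↑α : Set (ℝ × ℝ)) ⊆ ⋃ j ∈ Finset.Icc 1 n, Sj j)
    (hopt : distortion P (↑α : Set (ℝ × ℝ)) = Vc P n) :
    ∀ p ∈ α, p.2 = 1 / (n : ℝ) := by
  have hout := P_outside P hP
  have hn1 : 1 ≤ n := le_trans (by norm_num) hn
  have hnR : (0:ℝ) < n := by exact_mod_cast hn1
  set Fα := fun x => α.inf' hne (rho x) with hFα
  have hintα : Integrable Fα P := integrable_inf' P hout hn1 α hne hsub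
  have hVα : ∫ x, Fα x ∂P = Vc P n := by
    rw [← distortion_eq P α hne]; exact hopt
  -- Stage A : every point of an optimal set has a Voronoi region of positive measure
  have stageA : ∀ q ∈ α, P {x | Fα x = rho x q} ≠ 0 := by
    intro q hq h0
    by_cases hαq : α.erase q = ∅
    · -- α = {q}, so the Voronoi region is everything
      have hα1 : ∀ q' ∈ α, q' = q := by
        intro q' hq'
        by_contra hne'
        exact (Finset.eq_empty_iff_forall_notMem.mp hαq q')
          (Finset.mem_erase.mpr ⟨hne', hq'⟩)
      have huniv : {x | Fα x = rho x q} = univ := by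
        refine eq_univ_iff_forall.mpr fun x => ?_
        have h1 : Fα x ≤ rho x q := Finset.inf'_le _ hq
        have h2 : rho x q ≤ Fα x :=
          Finset.le_inf' hne _ fun q' hq' => by rw [hα1 q' hq']
        exact le_antisymm h1 h2
      rw [huniv] at h0
      simp [measure_univ] at h0
    · have hne' : (α.erase q).Nonempty := Finset.nonempty_of_ne_empty hαq
      set α' := α.erase q with hα'
      set Fα' := fun x => α'.inf' hne' (rho x) with hFα'
      have hsubα' : (↑α' : Set (ℝ × ℝ)) ⊆ ⋃ j ∈ Finset.Icc 1 n, Sj j :=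
        subset_trans (by exact_mod_cast Finset.coe_subset.mpr (Finset.erase_subset q α)) hsub
      have hintα' : Integrable Fα' P := integrable_inf' P hout hn1 α' hne' hsubα'
      -- off the null Voronoi region of q the two inf's agree
      have heq : ∫ x, Fα' x ∂P = ∫ x, Fα x ∂P := by
        refine integral_congr_ae ?_
        rw [Filter.EventuallyEq, ae_iff]
        refine measure_mono_null ?_ h0
        intro x hx
        simp only [Set.mem_setOf_eq] at hx ⊢
        by_contra hxq
        apply hx
        obtain ⟨i, hi, hieq⟩ := Finset.exists_mem_eq_inf' hne (rho x)
        have hiq : i ≠ q := by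
          intro h; rw [h] at hieq; exact hxq hieq
        have h1 : Fα' x ≤ rho x i := Finset.inf'_le _ (Finset.mem_erase.mpr ⟨hiq, hi⟩)
        have h2 : Fα x ≤ Fα' x := Finset.inf'_mono _ (Finset.erase_subset q α) hne'
        exact le_antisymm (h1.trans_eq hieq.symm) h2
      -- choose a support point away from the first coordinates of α'
      obtain ⟨c, hc, hcnot⟩ :=
        (suppPt_infinite P hP).exists_notMem_finset (α'.image Prod.fst)
      have hcIcc := suppPt_mem_Icc P hP hc
      set d := α'.inf' hne' (fun q' => |c - q'.1|) with hd'
      have hd : 0 < d := by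
        rw [hd', Finset.lt_inf'_iff]
        intro q' hq'
        rw [abs_pos, sub_ne_zero]
        intro hc'
        exact hcnot (Finset.mem_image.mpr ⟨q', hq', hc'.symm⟩)
      set β := insert (c, 1/(n:ℝ)) α' with hβ
      have hβne : β.Nonempty := ⟨_, Finset.mem_insert_self _ _⟩
      set Fβ := fun x => β.inf' hβne (rho x) with hFβ
      have hβsub : (↑β : Set (ℝ × ℝ)) ⊆ ⋃ j ∈ Finset.Icc 1 n, Sj j := by
        rw [hβ, Finset.coe_insert]
        intro z hz
        rcases hz with hz | hz
        · subst hz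
          simp only [Set.mem_iUnion]
          exact ⟨n, Finset.mem_Icc.mpr ⟨hn1, le_refl n⟩, ⟨hcIcc, rfl⟩⟩
        · exact hsubα' hz
      have hβcard : β.card ≤ n := by
        refine le_trans (Finset.card_insert_le _ _) ?_
        have h1 : α'.card = α.card - 1 := Finset.card_erase_of_mem hq
        have h2 : 1 ≤ α.card := Finset.card_pos.mpr hne
        omega
      have hβint : Integrable Fβ P := integrable_inf' P hout hn1 β hβne hβsub
      have hle : ∀ x, Fβ x ≤ Fα' x :=
        fun x => Finset.inf'_mono _ (Finset.subset_insert _ _) hne'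
      have hball : ∀ x ∈ Metric.ball c (d/2), Fβ x < Fα' x := by
        intro x hx
        rw [Metric.mem_ball, Real.dist_eq] at hx
        have h1 : Fβ x ≤ rho x (c, 1/(n:ℝ)) :=
          Finset.inf'_le _ (Finset.mem_insert_self _ _)
        obtain ⟨q', hq', hq'eq⟩ := Finset.exists_mem_eq_inf' hne' (rho x)
        have hdle : d ≤ |c - q'.1| := Finset.inf'_le _ hq'
        have htri : |c - q'.1| ≤ |c - x| + |x - q'.1| := by
          have := abs_sub_abs_le_abs_sub (c - q'.1) (c - x)
          calc |c - q'.1| = |(c - x) + (x - q'.1)| := by ring_nf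
            _ ≤ |c - x| + |x - q'.1| := abs_add_le _ _
        have hcx : |c - x| < d/2 := by rwa [abs_sub_comm]
        have hxq' : d/2 < |x - q'.1| := by linarith
        have hsq : (x - c)^2 < (x - q'.1)^2 := by
          have h1' : |x - c| < d/2 := hx
          have := abs_nonneg (x - c)
          nlinarith [sq_abs (x - c), sq_abs (x - q'.1)]
        have hsnd := (snd_bounds hn1 (hsubα' hq')).1
        have hq2pos : 0 < q'.2 := lt_of_lt_of_le (by positivity) hsnd
        have h1np : (0:ℝ) < 1/(n:ℝ) := by positivity
        have hsnd2 : (1/(n:ℝ))^2 ≤ q'.2^2 := pow_le_pow_left₀ h1np.le hsnd 2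
        calc Fβ x ≤ rho x (c, 1/(n:ℝ)) := h1
          _ = (x - c)^2 + (1/(n:ℝ))^2 := rfl
          _ < (x - q'.1)^2 + q'.2^2 := by linarith
          _ = rho x q' := rfl
          _ = Fα' x := hq'eq.symm
      have hballpos : P (Metric.ball c (d/2)) ≠ 0 := (hc (d/2) (by positivity)).ne'
      have hlt : ∫ x, Fβ x ∂P < ∫ x, Fα' x ∂P :=
        strict_integral_lt P hβint hintα' hle hballpos hball
      have hVcle : Vc P n ≤ ∫ x, Fβ x ∂P := by
        have := Vc_le P n β hβne hβcard hβsub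
        rwa [distortion_eq P β hβne] at this
      rw [heq, hVα] at hlt
      linarith
  -- Stage B : moving a point with second coordinate > 1/n down to 1/n strictly improves
  intro p hp
  by_contra hpn
  obtain ⟨j, hj1, hj2, hp1, hp2⟩ := mem_union_iff (hsub hp)
  have hpgt : 1/(n:ℝ) < p.2 := by
    have hjn : j ≠ n := by
      intro h; apply hpn; rw [hp2, h]
    have hjlt : j < n := lt_of_le_of_ne hj2 hjn
    have hjR : (0:ℝ) < j := by exact_mod_cast hj1
    rw [hp2]
    apply one_div_lt_one_div_of_lt hjR
    exact_mod_cast hjlt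
  have h1npos : (0:ℝ) < 1/(n:ℝ) := by positivity
  set β := insert (p.1, 1/(n:ℝ)) (α.erase p) with hβ
  have hβne : β.Nonempty := ⟨_, Finset.mem_insert_self _ _⟩
  set Fβ := fun x => β.inf' hβne (rho x) with hFβ
  have hβsub : (↑β : Set (ℝ × ℝ)) ⊆ ⋃ j ∈ Finset.Icc 1 n, Sj j := by
    rw [hβ, Finset.coe_insert]
    intro z hz
    rcases hz with hz | hz
    · subst hz
      simp only [Set.mem_iUnion]
      exact ⟨n, Finset.mem_Icc.mpr ⟨hn1, le_refl n⟩, ⟨hp1, rfl⟩⟩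
    · exact hsub (by exact_mod_cast Finset.coe_subset.mpr (Finset.erase_subset p α) hz)
  have hβcard : β.card ≤ n := by
    refine le_trans (Finset.card_insert_le _ _) ?_
    have h1 := Finset.card_erase_of_mem hp
    have h2 : 1 ≤ α.card := Finset.card_pos.mpr hne
    omega
  have hβint : Integrable Fβ P := integrable_inf' P hout hn1 β hβne hβsub
  have hrholt : ∀ x, rho x (p.1, 1/(n:ℝ)) < rho x p := by
    intro x
    unfold rho
    simp only
    nlinarith
  have hle : ∀ x, Fβ x ≤ Fα x := by
    intro x
    refine Finset.le_inf' hne _ fun q hq => ?_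
    by_cases hqp : q = p
    · subst hqp
      refine le_trans (Finset.inf'_le _ (Finset.mem_insert_self _ _)) (le_of_lt (hrholt x))
    · exact Finset.inf'_le _ (Finset.mem_insert_of_mem (Finset.mem_erase.mpr ⟨hqp, hq⟩))
  have hstrict : ∀ x ∈ {x | Fα x = rho x p}, Fβ x < Fα x := by
    intro x hx
    simp only [Set.mem_setOf_eq] at hx
    calc Fβ x ≤ rho x (p.1, 1/(n:ℝ)) := Finset.inf'_le _ (Finset.mem_insert_self _ _)
      _ < rho x p := hrholt x
      _ = Fα x := hx.symm
  have hlt : ∫ x, Fβ x ∂P < ∫ x, Fα x ∂P :=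
    strict_integral_lt P hβint hintα hle (stageA p hp) hstrict
  have hVcle : Vc P n ≤ ∫ x, Fβ x ∂P := by
    have := Vc_le P n β hβne hβcard hβsub
    rwa [distortion_eq P β hβne] at this
  rw [hVα] at hlt
  linarith
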